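/- arXiv:2210.16959 — 3 statements merged into one kernel-verified Lean document; each statement's English description precedes it below -/
import Mathlib

section
/- Let (p, Q) be either (83, 287) or (397, 132). Then for every integer n ≥ 1: if there exists c ∈ {0, 1, 4, 17} with n ≡ −c (mod Q), then ν_p(T(n)) = ν_p(n + c) + 1; otherwise ν_p(T(n)) = 0. (The four residue classes −0, −1, −4, −17 are pairwise distinct modulo Q, so c is unique when it exists.) -/
set_option maxRecDepth 100000
set_option maxHeartbeats 1000000

open Finset Matrix

def MLstep {R : Type*} [CommRing R] (x : R × R × R) : R × R × R :=
  (x.2.1, x.2.2, x.1 + x.2.1 + x.2.2)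

def MLtrip (R : Type*) [CommRing R] : ℕ → R × R × R
  | 0 => (0, 1, 1)
  | n+1 => MLstep (MLtrip R n)

def MLtb (R : Type*) [CommRing R] (n : ℕ) : R := (MLtrip R n).1

def Mmat : Matrix (Fin 3) (Fin 3) ℤ := !![1,1,1; 1,0,0; 0,1,0]

def svec (T : ℤ → ℤ) (a : ℤ) : Fin 3 → ℤ := ![T (a+2), T (a+1), T a]

section
variable {T : ℤ → ℤ}
variable (hT0 : T 0 = 0) (hT1 : T 1 = 1) (hT2 : T 2 = 1)
  (hTrec : ∀ n : ℤ, T (n + 3) = T (n + 2) + T (n + 1) + T n)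

include hTrec in
lemma ML_sstep (a : ℤ) : svec T (a+1) = Mmat *ᵥ svec T a := by
  funext i
  have h3 : a + 1 + 2 = a + 3 := by ring
  fin_cases i <;>
    simp [svec, Mmat, Matrix.mulVec, dotProduct, Fin.sum_univ_three, h3, hTrec a] <;>
    ring

include hTrec in
lemma ML_spow (m : ℕ) (a : ℤ) : svec T (a + m) = (Mmat ^ m) *ᵥ svec T a := by
  induction m with
  | zero => simp
  | succ m ih =>
      have : a + (m+1 : ℕ) = (a + m) + 1 := by push_cast; ring
      rw [this, ML_sstep hTrec, ih, Matrix.mulVec_mulVec, ← pow_succ']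

include hT0 hT1 hT2 hTrec in
lemma ML_cast (R : Type*) [CommRing R] :
    ∀ m : ℕ, MLtrip R m = (((T m : ℤ) : R), ((T (m+1) : ℤ) : R), ((T (m+2) : ℤ) : R)) := by
  intro m
  induction m with
  | zero => simp [MLtrip, hT0, hT1, hT2]
  | succ m ih =>
      have h := hTrec m
      have e2 : ((m+1 : ℕ):ℤ) = (m:ℤ) + 1 := by push_cast; ring
      have e1 : (m:ℤ) + 1 + 1 = (m:ℤ) + 2 := by ring
      have e3 : (m:ℤ) + 1 + 2 = (m:ℤ) + 3 := by ring
      simp only [MLtrip, MLstep, ih, e2, e1, e3, h, Prod.mk.injEq]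
      exact ⟨trivial, trivial, by push_cast; ring⟩

include hT0 hT1 hT2 hTrec in
lemma ML_neg : T (-1) = 0 ∧ T (-2) = 1 ∧ T (-4) = 0 ∧ T (-17) = 0 := by
  have hback : ∀ a : ℤ, T a = T (a+3) - T (a+2) - T (a+1) := fun a => by have := hTrec a; linarith
  have hm1 : T (-1) = 0 := by have h := hback (-1); norm_num at h; rw [hT2, hT1, hT0] at h; linarith
  have hm2 : T (-2) = 1 := by have h := hback (-2); norm_num at h; rw [hT1, hT0, hm1] at h; linarith
  have hm3 : T (-3) = -1 := by have h := hback (-3); norm_num at h; rw [hT0, hm1, hm2] at h; linarith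
  have hm4 : T (-4) = 0 := by have h := hback (-4); norm_num at h; rw [hm1, hm2, hm3] at h; linarith
  have hm5 : T (-5) = 2 := by have h := hback (-5); norm_num at h; rw [hm2, hm3, hm4] at h; linarith
  have hm6 : T (-6) = -3 := by have h := hback (-6); norm_num at h; rw [hm3, hm4, hm5] at h; linarith
  have hm7 : T (-7) = 1 := by have h := hback (-7); norm_num at h; rw [hm4, hm5, hm6] at h; linarith
  have hm8 : T (-8) = 4 := by have h := hback (-8); norm_num at h; rw [hm5, hm6, hm7] at h; linarith
  have hm9 : T (-9) = -8 := by have h := hback (-9); norm_num at h; rw [hm6, hm7, hm8] at h; linarith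
  have hm10 : T (-10) = 5 := by have h := hback (-10); norm_num at h; rw [hm7, hm8, hm9] at h; linarith
  have hm11 : T (-11) = 7 := by have h := hback (-11); norm_num at h; rw [hm8, hm9, hm10] at h; linarith
  have hm12 : T (-12) = -20 := by have h := hback (-12); norm_num at h; rw [hm9, hm10, hm11] at h; linarith
  have hm13 : T (-13) = 18 := by have h := hback (-13); norm_num at h; rw [hm10, hm11, hm12] at h; linarith
  have hm14 : T (-14) = 9 := by have h := hback (-14); norm_num at h; rw [hm11, hm12, hm13] at h; linarith
  have hm15 : T (-15) = -47 := by have h := hback (-15); norm_num at h; rw [hm12, hm13, hm14] at h; linarith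
  have hm16 : T (-16) = 56 := by have h := hback (-16); norm_num at h; rw [hm13, hm14, hm15] at h; linarith
  have hm17 : T (-17) = 0 := by have h := hback (-17); norm_num at h; rw [hm14, hm15, hm16] at h; linarith
  exact ⟨hm1, hm2, hm4, hm17⟩



include hT0 hT1 hT2 hTrec in
lemma ML_pow_closed (Q : ℕ) :
    Mmat ^ Q = !![T ((Q:ℤ)+1), T ((Q:ℤ)+2) - T ((Q:ℤ)+1), T (Q:ℤ);
      T (Q:ℤ), T ((Q:ℤ)+1) - T (Q:ℤ), T ((Q:ℤ)-1);
      T ((Q:ℤ)-1), T (Q:ℤ) - T ((Q:ℤ)-1), T ((Q:ℤ)-2)] := by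
  obtain ⟨hm1, hm2, -, -⟩ := ML_neg hT0 hT1 hT2 hTrec
  have e0 : svec T (-1) = ![1,0,0] := by
    funext i; fin_cases i <;> norm_num [svec, hT1, hT0, hm1]
  have e2 : svec T (-2) = ![0,0,1] := by
    funext i; fin_cases i <;> norm_num [svec, hT0, hm1, hm2]
  have e1 : svec T 0 = ![1,1,0] := by
    funext i; fin_cases i <;> norm_num [svec, hT0, hT1, hT2]
  have s0 := ML_spow hTrec Q (-1)
  have s1 := ML_spow hTrec Q 0
  have s2 := ML_spow hTrec Q (-2)
  rw [e0] at s0; rw [e1] at s1; rw [e2] at s2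
  have u0 : T ((Q:ℤ)+1) = (Mmat^Q) 0 0 := by
    have h := congrFun s0 0
    simp [svec, Matrix.mulVec, dotProduct, Fin.sum_univ_three] at h
    convert h using 2 <;> ring
  have u1 : T (Q:ℤ) = (Mmat^Q) 1 0 := by
    have h := congrFun s0 1
    simp [svec, Matrix.mulVec, dotProduct, Fin.sum_univ_three] at h
    convert h using 2 <;> ring
  have u2 : T ((Q:ℤ)-1) = (Mmat^Q) 2 0 := by
    have h := congrFun s0 2
    simp [svec, Matrix.mulVec, dotProduct, Fin.sum_univ_three] at h
    convert h using 2 <;> ring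
  have w0 : T (Q:ℤ) = (Mmat^Q) 0 2 := by
    have h := congrFun s2 0
    simp [svec, Matrix.mulVec, dotProduct, Fin.sum_univ_three] at h
    convert h using 2 <;> ring
  have w1 : T ((Q:ℤ)-1) = (Mmat^Q) 1 2 := by
    have h := congrFun s2 1
    simp [svec, Matrix.mulVec, dotProduct, Fin.sum_univ_three] at h
    convert h using 2 <;> ring
  have w2 : T ((Q:ℤ)-2) = (Mmat^Q) 2 2 := by
    have h := congrFun s2 2
    simp [svec, Matrix.mulVec, dotProduct, Fin.sum_univ_three] at h
    convert h using 2 <;> ring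
  have v0 : T ((Q:ℤ)+2) = (Mmat^Q) 0 0 + (Mmat^Q) 0 1 := by
    have h := congrFun s1 0
    simp [svec, Matrix.mulVec, dotProduct, Fin.sum_univ_three] at h
    convert h using 2 <;> ring
  have v1 : T ((Q:ℤ)+1) = (Mmat^Q) 1 0 + (Mmat^Q) 1 1 := by
    have h := congrFun s1 1
    simp [svec, Matrix.mulVec, dotProduct, Fin.sum_univ_three] at h
    convert h using 2 <;> ring
  have v2 : T (Q:ℤ) = (Mmat^Q) 2 0 + (Mmat^Q) 2 1 := by
    have h := congrFun s1 2
    simp [svec, Matrix.mulVec, dotProduct, Fin.sum_univ_three] at h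
    convert h using 2 <;> ring
  ext i j
  fin_cases i <;> fin_cases j <;> simp <;>
    linarith [u0, u1, u2, w0, w1, w2, v0, v1, v2]

include hT0 hT1 hT2 hTrec in
lemma ML_B (p Q : ℕ)
    (d0 : (p:ℤ) ∣ T (Q:ℤ)) (dm1 : (p:ℤ) ∣ T ((Q:ℤ)-1)) (dm2 : (p:ℤ) ∣ (T ((Q:ℤ)-2) - 1))
    (d1 : (p:ℤ) ∣ (T ((Q:ℤ)+1) - 1)) (d2 : (p:ℤ) ∣ (T ((Q:ℤ)+2) - 1)) :
    ∃ B : Matrix (Fin 3) (Fin 3) ℤ, Mmat ^ Q = 1 + (p:ℤ) • B := by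
  have hdvd : ∀ i j, (p:ℤ) ∣ ((Mmat ^ Q - 1) i j) := by
    intro i j
    rw [ML_pow_closed hT0 hT1 hT2 hTrec Q]
    fin_cases i <;> fin_cases j <;>
      norm_num [Matrix.sub_apply, Matrix.one_apply, Fin.ext_iff] <;>
      first
        | exact d1
        | exact d0
        | exact dm1
        | exact dm2
        | exact dvd_sub d2 d1
        | exact dvd_sub d0 dm1
        | (rw [show T ((Q:ℤ)+1) - T (Q:ℤ) - 1 = (T ((Q:ℤ)+1) - 1) - T (Q:ℤ) from by ring]
           exact dvd_sub d1 d0)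
        | (rw [show T ((Q:ℤ)+2) - T ((Q:ℤ)+1) = (T ((Q:ℤ)+2) - 1) - (T ((Q:ℤ)+1) - 1) from by ring]
           exact dvd_sub d2 d1)
  refine ⟨Matrix.of fun i j => ((Mmat ^ Q - 1) i j) / p, ?_⟩
  ext i j
  have h2 : (p:ℤ) * ((Mmat ^ Q - 1) i j / p) = (Mmat ^ Q - 1) i j :=
    Int.mul_ediv_cancel' (hdvd i j)
  rw [Matrix.add_apply, Matrix.smul_apply, Matrix.of_apply, smul_eq_mul, h2, Matrix.sub_apply]
  ring


lemma ML_sum_mulVec {ι : Type*} (s : Finset ι) (f : ι → Matrix (Fin 3) (Fin 3) ℤ)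
    (v : Fin 3 → ℤ) : (∑ i ∈ s, f i) *ᵥ v = ∑ i ∈ s, (f i *ᵥ v) := by
  classical
  induction s using Finset.induction_on with
  | empty => simp [Matrix.zero_mulVec]
  | insert _ _ h ih => rw [Finset.sum_insert h, Finset.sum_insert h, Matrix.add_mulVec, ih]

lemma ML_mul_natCast (X : Matrix (Fin 3) (Fin 3) ℤ) (n : ℕ) :
    X * (n : Matrix (Fin 3) (Fin 3) ℤ) = ((n:ℤ)) • X := by
  rw [← (Nat.cast_commute n X).eq, ← nsmul_eq_mul, ← Nat.cast_smul_eq_nsmul ℤ]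

include hTrec in
lemma ML_form (p Q : ℕ) {B : Matrix (Fin 3) (Fin 3) ℤ} (hB : Mmat ^ Q = 1 + (p:ℤ) • B)
    (c : ℤ) (K : ℕ) :
    T (-c + (Q:ℤ) * K) =
      ∑ j ∈ range (K+1), (K.choose j : ℤ) * (p:ℤ)^j * ((B ^ j *ᵥ svec T (-c)) 2) := by
  have h1 := ML_spow hTrec (Q*K) (-c)
  have harg : (-c + ((Q*K:ℕ):ℤ)) = -c + (Q:ℤ)*K := by push_cast; ring
  rw [harg] at h1
  have h2 : Mmat ^ (Q*K) = ∑ j ∈ range (K+1), ((K.choose j : ℤ) * (p:ℤ)^j) • (B ^ j) := by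
    rw [pow_mul, hB]
    calc (1 + (p:ℤ)•B)^K = ((p:ℤ)•B + 1)^K := by rw [add_comm]
      _ = ∑ m ∈ range (K+1), ((p:ℤ)•B)^m * 1^(K-m) * (K.choose m : Matrix (Fin 3) (Fin 3) ℤ) :=
          (Commute.one_right _).add_pow K
      _ = ∑ j ∈ range (K+1), ((K.choose j : ℤ) * (p:ℤ)^j) • (B ^ j) := by
          refine Finset.sum_congr rfl fun m _ => ?_
          rw [one_pow, mul_one, smul_pow, ML_mul_natCast, smul_smul]
  have h3 : T (-c + (Q:ℤ)*K) = (svec T (-c + (Q:ℤ)*K)) 2 := by simp [svec]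
  rw [h3, h1, h2, ML_sum_mulVec]
  rw [Finset.sum_apply]
  refine Finset.sum_congr rfl fun m _ => ?_
  rw [Matrix.smul_mulVec]
  simp [smul_eq_mul]


lemma ML_choose_val {p : ℕ} (hp : p.Prime) (hp5 : 5 ≤ p) {K j : ℕ} (hK : K ≠ 0) (hj : 2 ≤ j) :
    p ^ (padicValNat p K + 2) ∣ K.choose j * p ^ j := by
  haveI : Fact p.Prime := ⟨hp⟩
  rcases le_or_gt j K with h | h
  · have hC : K.choose j ≠ 0 := Nat.ne_of_gt (Nat.choose_pos h)
    have hj0 : j ≠ 0 := by omega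
    have hνj : padicValNat p j + 2 ≤ j := by
      by_contra h'
      push_neg at h'
      have hd : p ^ (j-1) ∣ j := dvd_trans (pow_dvd_pow p (by omega)) pow_padicValNat_dvd
      have hle : p ^ (j-1) ≤ j := Nat.le_of_dvd (by omega) hd
      have h2j : 2^j ≤ p^(j-1) := by
        calc 2^j ≤ 2^(2*(j-1)) := Nat.pow_le_pow_right (by norm_num) (by omega)
          _ = 4^(j-1) := by rw [pow_mul]; norm_num
          _ ≤ p^(j-1) := Nat.pow_le_pow_left (by omega) _
      have := Nat.lt_two_pow_self (n := j)
      omega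
    obtain ⟨K', rfl⟩ : ∃ K', K = K' + 1 := ⟨K - 1, by omega⟩
    obtain ⟨j', rfl⟩ : ∃ j', j = j' + 1 := ⟨j - 1, by omega⟩
    have hid : (K' + 1) * K'.choose j' = (K'+1).choose (j'+1) * (j'+1) :=
      Nat.add_one_mul_choose_eq K' j'
    have hC' : K'.choose j' ≠ 0 := Nat.ne_of_gt (Nat.choose_pos (by omega))
    have hv1 : padicValNat p ((K'+1) * K'.choose j') =
        padicValNat p (K'+1) + padicValNat p (K'.choose j') := padicValNat.mul (by omega) hC'
    have hv2 : padicValNat p ((K'+1).choose (j'+1) * (j'+1)) =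
        padicValNat p ((K'+1).choose (j'+1)) + padicValNat p (j'+1) :=
      padicValNat.mul hC (by omega)
    have hkey : padicValNat p (K'+1) ≤
        padicValNat p ((K'+1).choose (j'+1)) + padicValNat p (j'+1) := by
      rw [← hv2, ← hid, hv1]; omega
    have hexp : padicValNat p (K'+1) + 2 ≤ padicValNat p ((K'+1).choose (j'+1)) + (j'+1) := by
      omega
    calc p ^ (padicValNat p (K'+1) + 2)
        ∣ p ^ (padicValNat p ((K'+1).choose (j'+1)) + (j'+1)) := pow_dvd_pow p hexp
      _ = p ^ padicValNat p ((K'+1).choose (j'+1)) * p ^ (j'+1) := pow_add p _ _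
      _ ∣ (K'+1).choose (j'+1) * p ^ (j'+1) :=
          mul_dvd_mul pow_padicValNat_dvd dvd_rfl
  · simp [Nat.choose_eq_zero_of_lt h]


include hT0 hT1 hT2 hTrec in
lemma ML_master (p Q : ℕ) (hp : p.Prime) (hp5 : 5 ≤ p) (hQ17 : 17 < Q) (hpQ : ¬ p ∣ Q)
    (d0 : (p:ℤ) ∣ T (Q:ℤ)) (dm1 : (p:ℤ) ∣ T ((Q:ℤ)-1)) (dm2 : (p:ℤ) ∣ (T ((Q:ℤ)-2) - 1))
    (d1 : (p:ℤ) ∣ (T ((Q:ℤ)+1) - 1)) (d2 : (p:ℤ) ∣ (T ((Q:ℤ)+2) - 1))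
    (hsq : ∀ c : ℤ, c ∈ ({0, 1, 4, 17} : Set ℤ) → ¬ ((p:ℤ)^2 ∣ T ((Q:ℤ) - c)))
    (hnz : ∀ r : ℕ, r < Q → r ≠ 0 → r ≠ Q-1 → r ≠ Q-4 → r ≠ Q-17 → ¬ (p:ℤ) ∣ T r) :
    ∀ n : ℤ, 1 ≤ n →
      (∀ c : ℤ, c ∈ ({0, 1, 4, 17} : Set ℤ) → (Q : ℤ) ∣ (n + c) →
        padicValInt p (T n) = padicValInt p (n + c) + 1) ∧
      ((∀ c : ℤ, c ∈ ({0, 1, 4, 17} : Set ℤ) → ¬ (Q : ℤ) ∣ (n + c)) →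
        padicValInt p (T n) = 0) := by
  haveI : Fact p.Prime := ⟨hp⟩
  have hpI : Prime (p:ℤ) := Nat.prime_iff_prime_int.mp hp
  obtain ⟨B, hB⟩ := ML_B hT0 hT1 hT2 hTrec p Q d0 dm1 dm2 d1 d2
  obtain ⟨hm1, hm2, hm4, hm17⟩ := ML_neg hT0 hT1 hT2 hTrec
  intro n hn
  constructor
  · rintro c hc hdvd
    have hc' : c = 0 ∨ c = 1 ∨ c = 4 ∨ c = 17 := by simpa using hc
    have hTc : T (-c) = 0 := by
      rcases hc' with rfl|rfl|rfl|rfl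
      · simpa using hT0
      · exact hm1
      · exact hm4
      · exact hm17
    have hc017 : (0:ℤ) ≤ c ∧ c ≤ 17 := by rcases hc' with rfl|rfl|rfl|rfl <;> norm_num
    obtain ⟨k, hk⟩ := hdvd
    have hQ0 : (0:ℤ) < (Q:ℤ) := by exact_mod_cast (by omega : 0 < Q)
    have hk1 : 1 ≤ k := by
      by_contra hcon
      push_neg at hcon
      have : (Q:ℤ) * k ≤ 0 := mul_nonpos_of_nonneg_of_nonpos (le_of_lt hQ0) (by omega)
      omega
    set K := k.toNat with hKdef
    have hKk : (K:ℤ) = k := Int.toNat_of_nonneg (by omega)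
    have hK0 : K ≠ 0 := by
      intro h0
      rw [h0] at hKk
      omega
    have hneq : n = -c + (Q:ℤ)*K := by rw [hKk]; linarith
    set g : ℕ → ℤ := fun j => (B ^ j *ᵥ svec T (-c)) 2 with hg
    have hform := ML_form hTrec p Q hB c K
    rw [← hneq] at hform
    have hg0 : g 0 = 0 := by simp [hg, svec, hTc]
    have hform1 := ML_form hTrec p Q hB c 1
    have e1 : -c + (Q:ℤ)*(1:ℕ) = (Q:ℤ) - c := by push_cast; ring
    rw [e1] at hform1
    have hTQc : T ((Q:ℤ) - c) = (p:ℤ) * g 1 := by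
      rw [hform1]
      rw [Finset.sum_range_succ, Finset.sum_range_succ, Finset.sum_range_zero]
      simp [hg, svec, hTc]
    have hpg1 : ¬ (p:ℤ) ∣ g 1 := by
      intro hd
      refine hsq c hc ?_
      rw [hTQc, pow_two]
      exact mul_dvd_mul_left _ hd
    set v := padicValNat p K with hv
    have hvint : padicValInt p (n + c) = v := by
      have hnc : n + c = ((Q*K : ℕ) : ℤ) := by push_cast; rw [hKk]; linarith
      rw [hnc, padicValInt.of_nat, padicValNat.mul (by omega) hK0,
        padicValNat.eq_zero_of_not_dvd hpQ, zero_add]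
    have hKdvd : (p:ℤ)^v ∣ (K:ℤ) := by
      have : (p^v : ℕ) ∣ K := pow_padicValNat_dvd
      exact_mod_cast Int.natCast_dvd_natCast.mpr this
    have hKnot : ¬ (p:ℤ)^(v+1) ∣ (K:ℤ) := by
      intro hdd
      have : (p^(v+1) : ℕ) ∣ K := by exact_mod_cast hdd
      exact pow_succ_padicValNat_not_dvd hK0 this
    set S : ℕ → ℤ := fun j => (K.choose j : ℤ) * (p:ℤ)^j * g j with hS
    have hsplit : T n = S 1 + ∑ j ∈ Finset.Ico 2 (K+1), S j := by
      rw [hform]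
      have h2 : 2 ≤ K + 1 := by omega
      rw [range_eq_Ico, ← Finset.sum_Ico_consecutive _ (Nat.zero_le 2) h2]
      have hfirst : ∑ j ∈ Finset.Ico 0 2, S j = S 0 + S 1 := by
        rw [← range_eq_Ico]
        rw [Finset.sum_range_succ, Finset.sum_range_succ, Finset.sum_range_zero]
        ring
      rw [hfirst]
      have hS0 : S 0 = 0 := by simp [hS, hg0]
      rw [hS0, zero_add]
    have hS1 : S 1 = (K:ℤ) * ((p:ℤ) * g 1) := by simp [hS]; ring
    have hrest : (p:ℤ)^(v+2) ∣ ∑ j ∈ Finset.Ico 2 (K+1), S j := by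
      refine Finset.dvd_sum fun j hj => ?_
      have hj2 : 2 ≤ j := (Finset.mem_Ico.mp hj).1
      have hnat := ML_choose_val hp hp5 hK0 hj2
      have hcast : (p:ℤ)^(v+2) ∣ (K.choose j : ℤ) * (p:ℤ)^j := by
        have := Int.natCast_dvd_natCast.mpr hnat
        push_cast at this
        exact this
      exact hcast.mul_right (g j)
    have hmain : (p:ℤ)^(v+1) ∣ S 1 := by
      rw [hS1, pow_succ]
      exact mul_dvd_mul hKdvd (Dvd.intro _ rfl)
    have hTdvd : (p:ℤ)^(v+1) ∣ T n := by
      rw [hsplit]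
      exact dvd_add hmain (dvd_trans (pow_dvd_pow _ (by omega)) hrest)
    have hTnot : ¬ (p:ℤ)^(v+2) ∣ T n := by
      intro hdd
      have hS1d : (p:ℤ)^(v+2) ∣ S 1 := by
        have hrw : S 1 = T n - ∑ j ∈ Finset.Ico 2 (K+1), S j := by rw [hsplit]; ring
        rw [hrw]
        exact dvd_sub hdd hrest
      rw [hS1] at hS1d
      have hrw2 : (K:ℤ) * ((p:ℤ) * g 1) = (p:ℤ) * ((K:ℤ) * g 1) := by ring
      rw [hrw2, pow_succ'] at hS1d
      have hcan : (p:ℤ)^(v+1) ∣ (K:ℤ) * g 1 :=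
        (mul_dvd_mul_iff_left hpI.ne_zero).mp hS1d
      have hcop : IsCoprime ((p:ℤ)^(v+1)) (g 1) :=
        ((hpI.coprime_iff_not_dvd).mpr hpg1).pow_left
      exact hKnot (hcop.dvd_of_dvd_mul_right hcan)
    have hTn0 : T n ≠ 0 := fun h0 => hTnot (h0 ▸ dvd_zero _)
    have hle : v + 1 ≤ padicValInt p (T n) :=
      ((padicValInt_dvd_iff (v+1) (T n)).mp hTdvd).resolve_left hTn0
    have hlt : ¬ (v + 2 ≤ padicValInt p (T n)) := fun hh =>
      hTnot ((padicValInt_dvd_iff (v+2) (T n)).mpr (Or.inr hh))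
    rw [hvint]
    omega
  · intro hnc
    have hQ0 : (0:ℤ) < (Q:ℤ) := by exact_mod_cast (by omega : 0 < Q)
    have hper : ∀ a : ℤ, (p:ℤ) ∣ (T (a + Q) - T a) := by
      intro a
      have h1 := congrFun (ML_spow hTrec Q a) 2
      rw [hB, Matrix.add_mulVec, Matrix.one_mulVec, Matrix.smul_mulVec] at h1
      simp only [svec, Pi.add_apply, Pi.smul_apply, smul_eq_mul, Matrix.cons_val_two,
        Matrix.tail_cons, Matrix.head_cons] at h1
      refine ⟨(B *ᵥ svec T a) 2, ?_⟩
      rw [h1]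
      simp [svec]
    have hperm : ∀ (m : ℕ) (a : ℤ), (p:ℤ) ∣ (T (a + Q*m) - T a) := by
      intro m
      induction m with
      | zero => simp
      | succ m ih =>
          intro a
          have h1 := hper (a + Q*m)
          have h2 := ih a
          have harg : a + (Q:ℤ)*((m+1:ℕ):ℤ) = (a + Q*m) + Q := by push_cast; ring
          rw [harg]
          have := dvd_add h1 h2
          convert this using 1
          · rfl
          · ring
    set r : ℕ := (n % Q).toNat with hrdef
    have hrZ : (r:ℤ) = n % Q := Int.toNat_of_nonneg (Int.emod_nonneg n (by omega))
    have hrQ : r < Q := by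
      have := Int.emod_lt_of_pos n hQ0
      omega
    have hsplitn : n = (r:ℤ) + (Q:ℤ) * (n / Q) := by
      rw [hrZ]
      have := Int.mul_ediv_add_emod n Q
      linarith
    have hmnonneg : 0 ≤ n / Q := Int.ediv_nonneg (by omega) (by omega)
    have hnr : (p:ℤ) ∣ T n - T r := by
      have h1 := hperm (n / Q).toNat (r:ℤ)
      have harg : (r:ℤ) + (Q:ℤ)*(((n/Q).toNat : ℕ):ℤ) = n := by
        rw [Int.toNat_of_nonneg hmnonneg]
        linarith
      rw [harg] at h1
      exact h1
    have hgen : ∀ c' : ℕ, 0 < c' → c' < Q → r = Q - c' → (Q:ℤ) ∣ n + c' := by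
      intro c' hc'0 hc'Q hreq
      have hrc : (r:ℤ) = (Q:ℤ) - c' := by
        rw [hreq]
        push_cast [Nat.cast_sub (le_of_lt hc'Q)]
        ring
      refine ⟨n / Q + 1, ?_⟩
      have h := hsplitn
      rw [hrc] at h
      ring_nf
      ring_nf at h
      linarith
    have h0 := hnc 0 (by simp)
    have h1 := hnc 1 (by simp)
    have h4 := hnc 4 (by simp)
    have h17 := hnc 17 (by simp)
    have hr0 : r ≠ 0 := by
      intro h
      refine h0 ?_
      have : n % Q = 0 := by omega
      simpa using Int.dvd_of_emod_eq_zero this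
    have hr1 : r ≠ Q - 1 := fun h => h1 (by simpa using hgen 1 (by omega) (by omega) h)
    have hr4 : r ≠ Q - 4 := fun h => h4 (by simpa using hgen 4 (by omega) (by omega) h)
    have hr17 : r ≠ Q - 17 := fun h => h17 (by simpa using hgen 17 (by omega) (by omega) h)
    have hnd := hnz r hrQ hr0 hr1 hr4 hr17
    have hfin : ¬ (p:ℤ) ∣ T n := by
      intro hd
      refine hnd ?_
      have := dvd_sub hd hnr
      simpa using this
    exact padicValInt.eq_zero_of_not_dvd hfin


include hT0 hT1 hT2 hTrec in
lemma ML_tb_eq (R : Type*) [CommRing R] (m : ℕ) : ((T m : ℤ) : R) = MLtb R m :=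
  (congrArg Prod.fst (ML_cast hT0 hT1 hT2 hTrec R m)).symm

include hT0 hT1 hT2 hTrec in
lemma ML_case (p Q : ℕ) (hp : Nat.Prime p) (hp5 : 5 ≤ p) (hQ17 : 17 < Q) (hpQ : ¬ p ∣ Q)
    (z1 : MLtb (ZMod p) Q = 0) (z2 : MLtb (ZMod p) (Q-1) = 0) (z3 : MLtb (ZMod p) (Q-2) = 1)
    (z4 : MLtb (ZMod p) (Q+1) = 1) (z5 : MLtb (ZMod p) (Q+2) = 1)
    (w1 : MLtb (ZMod (p*p)) Q ≠ 0) (w2 : MLtb (ZMod (p*p)) (Q-1) ≠ 0)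
    (w3 : MLtb (ZMod (p*p)) (Q-4) ≠ 0) (w4 : MLtb (ZMod (p*p)) (Q-17) ≠ 0)
    (hd : ∀ r : ℕ, r < Q → MLtb (ZMod p) r = 0 → r = 0 ∨ r = Q-1 ∨ r = Q-4 ∨ r = Q-17) :
    ∀ n : ℤ, 1 ≤ n →
      (∀ c : ℤ, c ∈ ({0, 1, 4, 17} : Set ℤ) → (Q : ℤ) ∣ (n + c) →
        padicValInt p (T n) = padicValInt p (n + c) + 1) ∧
      ((∀ c : ℤ, c ∈ ({0, 1, 4, 17} : Set ℤ) → ¬ (Q : ℤ) ∣ (n + c)) →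
        padicValInt p (T n) = 0) := by
  have key0 : ∀ (N m : ℕ), MLtb (ZMod N) m = 0 → (N:ℤ) ∣ T m := by
    intro N m h
    rw [← ML_tb_eq hT0 hT1 hT2 hTrec] at h
    exact (ZMod.intCast_zmod_eq_zero_iff_dvd _ N).mp h
  have key0' : ∀ (N m : ℕ), (N:ℤ) ∣ T m → MLtb (ZMod N) m = 0 := by
    intro N m h
    rw [← ML_tb_eq hT0 hT1 hT2 hTrec]
    exact (ZMod.intCast_zmod_eq_zero_iff_dvd _ N).mpr h
  have key1 : ∀ (N m : ℕ), MLtb (ZMod N) m = 1 → (N:ℤ) ∣ (T m - 1) := by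
    intro N m h
    have : ((T m - 1 : ℤ) : ZMod N) = 0 := by
      push_cast
      rw [ML_tb_eq hT0 hT1 hT2 hTrec, h]
      ring
    exact (ZMod.intCast_zmod_eq_zero_iff_dvd _ N).mp this
  have e1 : ((Q:ℤ) - 1) = ((Q - 1 : ℕ) : ℤ) := by push_cast [Nat.cast_sub (by omega : 1 ≤ Q)]; ring
  have e2 : ((Q:ℤ) - 2) = ((Q - 2 : ℕ) : ℤ) := by push_cast [Nat.cast_sub (by omega : 2 ≤ Q)]; ring
  have e4 : ((Q:ℤ) - 4) = ((Q - 4 : ℕ) : ℤ) := by push_cast [Nat.cast_sub (by omega : 4 ≤ Q)]; ring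
  have e17 : ((Q:ℤ) - 17) = ((Q - 17 : ℕ) : ℤ) := by
    push_cast [Nat.cast_sub (by omega : 17 ≤ Q)]; ring
  have ep1 : ((Q:ℤ) + 1) = ((Q + 1 : ℕ) : ℤ) := by push_cast; ring
  have ep2 : ((Q:ℤ) + 2) = ((Q + 2 : ℕ) : ℤ) := by push_cast; ring
  apply ML_master hT0 hT1 hT2 hTrec p Q hp hp5 hQ17 hpQ
  · exact key0 p Q z1
  · rw [e1]; exact key0 p (Q-1) z2
  · rw [e2]; exact key1 p (Q-2) z3
  · rw [ep1]; exact key1 p (Q+1) z4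
  · rw [ep2]; exact key1 p (Q+2) z5
  · intro c hc hdvd
    have hsqN : ((p*p : ℕ) : ℤ) ∣ T ((Q:ℤ) - c) := by
      have : ((p*p : ℕ) : ℤ) = (p:ℤ)^2 := by push_cast; ring
      rw [this]
      exact hdvd
    have hc' : c = 0 ∨ c = 1 ∨ c = 4 ∨ c = 17 := by simpa using hc
    rcases hc' with rfl|rfl|rfl|rfl
    · refine w1 (key0' (p*p) Q ?_)
      rw [show ((Q:ℤ) - 0) = ((Q:ℕ):ℤ) from by ring] at hsqN
      exact hsqN
    · refine w2 (key0' (p*p) (Q-1) ?_)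
      rw [e1] at hsqN
      exact hsqN
    · refine w3 (key0' (p*p) (Q-4) ?_)
      rw [e4] at hsqN
      exact hsqN
    · refine w4 (key0' (p*p) (Q-17) ?_)
      rw [e17] at hsqN
      exact hsqN
  · intro r hr h0 h1 h4 h17 hdvd
    rcases hd r hr (key0' p r hdvd) with h|h|h|h
    · exact h0 h
    · exact h1 h
    · exact h4 h
    · exact h17 h

end

/-- For `(p, Q) ∈ {(83, 287), (397, 132)}` and every integer `n ≥ 1`:
if `n ≡ −c (mod Q)` for some `c ∈ {0, 1, 4, 17}` then `ν_p(T(n)) = ν_p(n + c) + 1`,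
and otherwise `ν_p(T(n)) = 0`. -/
theorem marquesLengyel_holds_83_397
    (T : ℤ → ℤ)
    (hT0 : T 0 = 0) (hT1 : T 1 = 1) (hT2 : T 2 = 1)
    (hTrec : ∀ n : ℤ, T (n + 3) = T (n + 2) + T (n + 1) + T n)
    (p Q : ℕ) (hpQ : (p = 83 ∧ Q = 287) ∨ (p = 397 ∧ Q = 132)) :
    ∀ n : ℤ, 1 ≤ n →
      (∀ c : ℤ, c ∈ ({0, 1, 4, 17} : Set ℤ) → (Q : ℤ) ∣ (n + c) →
        padicValInt p (T n) = padicValInt p (n + c) + 1) ∧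
      ((∀ c : ℤ, c ∈ ({0, 1, 4, 17} : Set ℤ) → ¬ (Q : ℤ) ∣ (n + c)) →
        padicValInt p (T n) = 0) := by
  rcases hpQ with ⟨hp', hQ'⟩ | ⟨hp', hQ'⟩ <;> subst hp' <;> subst hQ'
  · exact ML_case hT0 hT1 hT2 hTrec 83 287 (by norm_num) (by norm_num) (by norm_num)
      (by decide) (by decide) (by decide) (by decide) (by decide) (by decide)
      (by decide) (by decide) (by decide) (by decide) (by decide)
  · exact ML_case hT0 hT1 hT2 hTrec 397 132 (by norm_num) (by norm_num) (by norm_num)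
      (by decide) (by decide) (by decide) (by decide) (by decide) (by decide)
      (by decide) (by decide) (by decide) (by decide) (by decide)
end

section
/- Let p be a prime with p ∉ {2, 11} and let N = N_p. Assume that for every ℓ ∈ {0, 1, …, N−1} with p ∣ T(ℓ), one has both T(ℓ+N) ≢ T(ℓ) (mod p²) and ℓ ≡ a (mod N) for some a ∈ {0, −1, −4, −17}. Then the Marques–Lengyel property holds at p. -/
/-- The Marques–Lengyel property at a prime `p`, for a sequence `T : ℤ → ℤ`. -/
def MarquesLengyelProp (p : ℕ) (T : ℤ → ℤ) : Prop :=
  ∃ Q : ℕ, 0 < Q ∧ ∀ i : ℕ, i < Q →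
    (∃ κ : ℕ, {n : ℤ | (Q : ℤ) ∣ (n - i) ∧ padicValInt p (T n) ≠ κ}.Finite) ∨
    (∃ a κ : ℤ, ∃ μ : ℕ, 0 < μ ∧ (p : ℤ) ^ (padicValNat p Q) ∣ (a - i) ∧
      {n : ℤ | (Q : ℤ) ∣ (n - i) ∧
        (padicValInt p (T n) : ℤ) ≠ κ + μ * padicValInt p (n - a)}.Finite)



namespace MLaux
abbrev R3 := Matrix (Fin 3) (Fin 3) ℤ

def U : R3ˣ where
  val := !![1,1,1;1,0,0;0,1,0]
  inv := !![0,1,0;0,0,1;1,-1,-1]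
  val_inv := by decide
  inv_val := by decide

def vv (T : ℤ → ℤ) (n : ℤ) : Fin 3 → ℤ := ![T (n+2), T (n+1), T n]

variable {T : ℤ → ℤ}

lemma vv_step (hTrec : ∀ n : ℤ, T (n + 3) = T (n + 2) + T (n + 1) + T n) (n : ℤ) :
    (U : R3).mulVec (vv T n) = vv T (n+1) := by
  have h := hTrec n
  funext i
  fin_cases i <;>
    simp [U, vv, Matrix.mulVec, dotProduct, Fin.sum_univ_succ] <;>
    · ring_nf at h ⊢ <;> linarith [h]

lemma vv_stepinv (hTrec : ∀ n : ℤ, T (n + 3) = T (n + 2) + T (n + 1) + T n) (n : ℤ) :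
    ((U⁻¹ : R3ˣ) : R3).mulVec (vv T (n+1)) = vv T n := by
  rw [← vv_step hTrec n, Matrix.mulVec_mulVec]
  simp

lemma vv_zpow (hTrec : ∀ n : ℤ, T (n + 3) = T (n + 2) + T (n + 1) + T n) (k : ℤ) (n : ℤ) :
    vv T (n + k) = ((U ^ k : R3ˣ) : R3).mulVec (vv T n) := by
  induction k using Int.induction_on with
  | zero => simp
  | succ j ih =>
      have h0 : n + ((j:ℤ) + 1) = (n + j) + 1 := by ring
      rw [h0, ← vv_step hTrec, ih, Matrix.mulVec_mulVec]
      rw [← Units.val_mul, show ((j:ℤ)+1) = 1 + (j:ℤ) by ring, zpow_add, zpow_one]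
  | pred j ih =>
      have h1 : n + (-(j:ℤ) - 1) + 1 = n + (-(j:ℤ)) := by ring
      have h2 := vv_stepinv hTrec (T := T) (n + (-(j:ℤ) - 1))
      rw [h1, ih] at h2
      rw [← h2, Matrix.mulVec_mulVec]
      congr 1
      rw [← Units.val_mul]
      rw [show (-(j:ℤ)-1) = (-1) + -(j:ℤ) by ring, zpow_add, zpow_neg_one]


/-- entrywise divisibility -/
def MDvd (d : ℤ) (X : R3) : Prop := ∀ i j, d ∣ X i j

lemma MDvd.smul {d c : ℤ} (h : d ∣ c) (A : R3) : MDvd d (c • A) := by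
  intro i j; simpa using Dvd.dvd.mul_right h _

lemma MDvd.mul_right {d : ℤ} {A : R3} (h : MDvd d A) (X : R3) : MDvd d (A * X) := by
  intro i j
  rw [Matrix.mul_apply]
  exact Finset.dvd_sum fun k _ => Dvd.dvd.mul_right (h i k) _

lemma MDvd.sum {d : ℤ} {s : Finset ℕ} {f : ℕ → R3} (h : ∀ m ∈ s, MDvd d (f m)) :
    MDvd d (∑ m ∈ s, f m) := by
  intro i j
  rw [Matrix.sum_apply]
  exact Finset.dvd_sum fun k hk => h k hk i j

lemma MDvd.exists_eq {d : ℤ} {X : R3} (h : MDvd d X) : ∃ C : R3, X = d • C := by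
  refine ⟨fun i j => X i j / d, ?_⟩
  ext i j
  exact (Int.mul_ediv_cancel' (h i j)).symm

variable {p : ℕ}

lemma pow_p_expand (hp : p.Prime) (hp2 : p ≠ 2) :
    ∀ (t : ℕ) (B0 X : R3), X = 1 + (p:ℤ) • B0 →
      ∃ C, X ^ (p ^ t) = 1 + ((p:ℤ)^(t+1)) • B0 + ((p:ℤ)^(t+2)) • C := by
  intro t
  induction t with
  | zero =>
      intro B0 X hX
      exact ⟨0, by simpa [hX] using by match_scalars <;> ring⟩
  | succ t ih =>
      intro B0 X hX
      obtain ⟨C, hC⟩ := ih B0 X hX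
      set D : R3 := B0 + (p:ℤ) • C with hD
      have hXpt : X ^ (p ^ t) = 1 + ((p:ℤ)^(t+1)) • D := by
        rw [hC, hD]; match_scalars <;> ring
      set z : R3 := ((p:ℤ)^(t+1)) • D with hz
      have hcomm : Commute z (1 : R3) := Commute.one_right z
      have hbin : (z + 1) ^ p = ∑ m ∈ Finset.range (p + 1), z ^ m * (1:R3) ^ (p - m) * (p.choose m : R3) :=
        hcomm.add_pow p
      have hp3 : 3 ≤ p := by
        rcases hp.two_le.lt_or_eq with h | h
        · omega
        · omega
      -- peel off m = 0 and m = 1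
      obtain ⟨q, hq⟩ : ∃ q, p + 1 = q + 2 := ⟨p - 1, by omega⟩
      have hsum : ∑ m ∈ Finset.range (p + 1), z ^ m * (1:R3) ^ (p - m) * (p.choose m : R3)
          = 1 + (p:ℤ) • z + ∑ m ∈ Finset.range q, z ^ (m+2) * (p.choose (m+2) : R3) := by
        rw [hq, Finset.sum_range_succ', Finset.sum_range_succ']
        simp [Nat.choose_one_right]
        have e : ∀ x : ℕ, x + 1 + 1 = x + 2 := fun x => rfl
        simp only [e, natCast_zsmul, nsmul_eq_mul, (Nat.cast_commute p z).eq]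
        abel
      have htail : MDvd ((p:ℤ)^(t+3)) (∑ m ∈ Finset.range q, z ^ (m+2) * (p.choose (m+2) : R3)) := by
        apply MDvd.sum
        intro m hm
        have hm2p : m + 2 ≤ p := by
          have := Finset.mem_range.mp hm; omega
        have hterm : z ^ (m+2) * (p.choose (m+2) : R3)
            = (((p:ℤ)^(t+1))^(m+2) * (p.choose (m+2) : ℤ)) • (D ^ (m+2)) := by
          rw [hz, smul_pow]
          rw [show ((p.choose (m+2) : ℕ) : R3) = (((p.choose (m+2) : ℤ)) : R3) by push_cast; rfl,
            ← zsmul_eq_mul']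
          rw [smul_smul, mul_comm]
        rw [hterm]
        apply MDvd.smul
        -- p^(t+3) ∣ p^((t+1)(m+2)) * choose
        rcases eq_or_lt_of_le hm2p with heq | hlt
        · -- m + 2 = p, choose = 1, exponent (t+1)*p ≥ t+3
          have : (t+3) ≤ (t+1) * (m+2) := by nlinarith
          calc ((p:ℤ))^(t+3) ∣ ((p:ℤ))^((t+1)*(m+2)) := pow_dvd_pow _ this
            _ ∣ _ := by rw [← pow_mul]; exact Dvd.intro _ rfl
        · -- p ∣ choose p (m+2)
          have hch : (p:ℤ) ∣ (p.choose (m+2) : ℤ) := by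
            exact_mod_cast Int.natCast_dvd_natCast.mpr (hp.dvd_choose_self (by omega) hlt)
          have h1 : ((p:ℤ))^(t+3) ∣ ((p:ℤ))^((t+1)*(m+2)) * (p:ℤ) := by
            have : t + 2 ≤ (t+1)*(m+2) := by nlinarith
            calc ((p:ℤ))^(t+3) = ((p:ℤ))^(t+2) * (p:ℤ) := by ring
              _ ∣ ((p:ℤ))^((t+1)*(m+2)) * (p:ℤ) := mul_dvd_mul_right (pow_dvd_pow _ this) _
          calc ((p:ℤ))^(t+3) ∣ ((p:ℤ))^((t+1)*(m+2)) * (p:ℤ) := h1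
            _ ∣ _ := by rw [← pow_mul]; exact mul_dvd_mul_left _ hch
      obtain ⟨C2, hC2⟩ := htail.exists_eq
      refine ⟨C + C2, ?_⟩
      have hXp : X ^ (p ^ (t+1)) = (X ^ (p ^ t)) ^ p := by
        rw [← pow_mul, pow_succ]
      rw [hXp, hXpt, add_comm (1:R3) z, hbin, hsum, hC2, hz, hD]
      match_scalars <;> ring

lemma pow_m_expand :
    ∀ (m : ℕ) (t : ℕ) (D X : R3), X = 1 + ((p:ℤ)^(t+1)) • D →
      ∃ E, X ^ m = 1 + ((m : ℤ) * (p:ℤ)^(t+1)) • D + ((p:ℤ)^(t+2)) • E := by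
  intro m
  induction m with
  | zero => intro t D X hX; exact ⟨0, by simp⟩
  | succ m ih =>
      intro t D X hX
      obtain ⟨E, hE⟩ := ih t D X hX
      refine ⟨E + ((m:ℤ) * (p:ℤ)^t) • (D*D) + ((p:ℤ)^(t+1)) • (E*D), ?_⟩
      rw [pow_succ, hE, hX]
      simp only [mul_add, add_mul, smul_mul_assoc, mul_smul_comm, smul_smul, mul_one, one_mul, smul_add]
      match_scalars <;> push_cast <;> ring

lemma pow_expand_full (hp : p.Prime) (hp2 : p ≠ 2) (t m : ℕ) (B0 X : R3)
    (hX : X = 1 + (p:ℤ) • B0) :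
    ∃ E, X ^ (p ^ t * m) = 1 + ((m:ℤ) * (p:ℤ)^(t+1)) • B0 + ((p:ℤ)^(t+2)) • E := by
  obtain ⟨C, hC⟩ := pow_p_expand hp hp2 t B0 X hX
  have hXpt : X ^ (p ^ t) = 1 + ((p:ℤ)^(t+1)) • (B0 + (p:ℤ) • C) := by
    rw [hC]; match_scalars <;> ring
  obtain ⟨E, hE⟩ := pow_m_expand m t (B0 + (p:ℤ) • C) (X ^ (p^t)) hXpt
  refine ⟨(m:ℤ) • C + E, ?_⟩
  rw [pow_mul, hE]
  match_scalars <;> ring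



variable {N : ℕ}

lemma exists_B (T : ℤ → ℤ) (hT0 : T 0 = 0) (hT1 : T 1 = 1) (hT2 : T 2 = 1)
    (hTrec : ∀ n : ℤ, T (n + 3) = T (n + 2) + T (n + 1) + T n)
    (hNper : ∀ n : ℤ, (p : ℤ) ∣ (T (n + N) - T n)) :
    ∃ B : R3, ((U ^ (N:ℤ) : R3ˣ) : R3) = 1 + (p:ℤ) • B := by
  set W : R3 := ((U ^ (N:ℤ) : R3ˣ) : R3) with hW
  have hT3 : T 3 = 2 := by have h := hTrec 0; norm_num at h; linarith
  have hT4 : T 4 = 4 := by have h := hTrec 1; norm_num at h; linarith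
  set P0 : R3 := !![1,2,4;1,1,2;0,1,1] with hP0
  set Q0 : R3 := !![-1,2,0;-1,1,2;1,-1,-1] with hQ0
  have hPQ : P0 * Q0 = 1 := by decide
  have hcolv : ∀ j : Fin 3, (fun k => P0 k j) = vv T (j:ℤ) := by
    intro j
    funext k
    fin_cases j <;> fin_cases k <;>
      norm_num [hP0, vv, Matrix.vecHead, Matrix.vecTail, hT0, hT1, hT2, hT3, hT4]
  have hWP : ∀ i j : Fin 3, (W * P0) i j = vv T ((j:ℤ) + N) i := by
    intro i j
    rw [vv_zpow hTrec (N:ℤ) (j:ℤ), Matrix.mul_apply, ← hcolv j]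
    rfl
  have hdvd1 : MDvd (p:ℤ) (W * P0 - P0) := by
    intro i j
    have h0 : (W * P0 - P0) i j = vv T ((j:ℤ) + N) i - vv T (j:ℤ) i := by
      rw [Matrix.sub_apply, hWP i j]
      congr 1
      have := congrFun (hcolv j) i
      beta_reduce at this
      rw [← this]
    rw [h0]
    fin_cases i <;> simp only [vv] <;>
      [ (have := hNper ((j:ℤ)+2);
         rw [show (j:ℤ)+2+(N:ℤ) = (j:ℤ)+(N:ℤ)+2 by ring] at this;
         simpa using this);
        (have := hNper ((j:ℤ)+1);
         rw [show (j:ℤ)+1+(N:ℤ) = (j:ℤ)+(N:ℤ)+1 by ring] at this;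
         simpa using this);
        (simpa using hNper (j:ℤ))]
  have hdvd : MDvd (p:ℤ) (W - 1) := by
    have hfact : W - 1 = (W * P0 - P0) * Q0 := by
      rw [sub_mul, mul_assoc, hPQ, mul_one]
    rw [hfact]
    exact hdvd1.mul_right Q0
  obtain ⟨B, hB⟩ := hdvd.exists_eq
  exact ⟨B, by rw [← hB]; abel⟩



lemma inv_form (B : R3) (hB : ((U ^ (N:ℤ) : R3ˣ) : R3) = 1 + (p:ℤ) • B) :
    ∃ B2 : R3, (((U ^ (N:ℤ))⁻¹ : R3ˣ) : R3) = 1 + (p:ℤ) • B2 ∧ ∃ G : R3, B2 = -B + (p:ℤ) • G := by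
  set Wu : R3ˣ := U ^ (N:ℤ) with hWu
  set Wi : R3 := ((Wu⁻¹ : R3ˣ) : R3) with hWi
  have h1 : Wi * ((Wu : R3ˣ) : R3) = 1 := by
    rw [hWi, ← Units.val_mul, inv_mul_cancel]; rfl
  rw [hB, mul_add, mul_one, mul_smul_comm] at h1
  have h3 : Wi = 1 - (p:ℤ) • (Wi * B) := by rw [← h1]; abel
  refine ⟨-(Wi * B), ?_, (Wi * B) * B, ?_⟩
  · rw [smul_neg, ← sub_eq_add_neg]; exact h3
  · calc -(Wi * B) = -((1 - (p:ℤ) • (Wi * B)) * B) := by rw [← h3]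
      _ = -B + (p:ℤ) • ((Wi * B) * B) := by
          rw [sub_mul, one_mul, smul_mul_assoc]; abel

lemma modp_pow (B : R3) (hB : ((U ^ (N:ℤ) : R3ˣ) : R3) = 1 + (p:ℤ) • B) (k : ℤ) :
    ∃ S : R3, (((U ^ (N:ℤ)) ^ k : R3ˣ) : R3) = 1 + (p:ℤ) • S := by
  obtain ⟨B2, hB2, -⟩ := inv_form B hB
  set Wu : R3ˣ := U ^ (N:ℤ) with hWu
  induction k using Int.induction_on with
  | zero => exact ⟨0, by simp⟩
  | succ j ih =>
      obtain ⟨S, hS⟩ := ih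
      refine ⟨S + B + (p:ℤ) • (S * B), ?_⟩
      rw [zpow_add_one, Units.val_mul, hS, hB]
      simp only [mul_add, add_mul, smul_mul_assoc, mul_smul_comm, smul_smul, mul_one, one_mul, smul_add]
      match_scalars <;> ring
  | pred j ih =>
      obtain ⟨S, hS⟩ := ih
      refine ⟨S + B2 + (p:ℤ) • (S * B2), ?_⟩
      rw [show (-(j:ℤ) - 1) = (-(j:ℤ)) + (-1) by ring, zpow_add, zpow_neg_one, Units.val_mul, hS, hB2]
      simp only [mul_add, add_mul, smul_mul_assoc, mul_smul_comm, smul_smul, mul_one, one_mul, smul_add]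
      match_scalars <;> ring

lemma main_expand (hp : p.Prime) (hp2 : p ≠ 2)
    (B : R3) (hB : ((U ^ (N:ℤ) : R3ˣ) : R3) = 1 + (p:ℤ) • B) (k : ℤ) (hk : k ≠ 0) :
    ∃ E : R3, (((U ^ (N:ℤ)) ^ k : R3ˣ) : R3)
      = 1 + ((k * p : ℤ)) • B + ((p:ℤ)^(padicValNat p k.natAbs + 2)) • E := by
  haveI : Fact p.Prime := ⟨hp⟩
  set Wu : R3ˣ := U ^ (N:ℤ) with hWu
  set t : ℕ := padicValNat p k.natAbs with ht
  have hka : k.natAbs ≠ 0 := Int.natAbs_ne_zero.mpr hk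
  have hdvd : p ^ t ∣ k.natAbs := pow_padicValNat_dvd
  set m : ℕ := k.natAbs / p ^ t with hm
  have hmm : p ^ t * m = k.natAbs := Nat.mul_div_cancel' hdvd
  rcases hk.lt_or_gt with hneg | hpos
  · -- k < 0
    obtain ⟨B2, hB2, G, hG⟩ := inv_form B hB
    obtain ⟨E1, hE1⟩ := pow_expand_full hp hp2 t m B2 ((Wu⁻¹ : R3ˣ) : R3) hB2
    refine ⟨(m:ℤ) • G + E1, ?_⟩
    have hk2 : k = -((k.natAbs : ℤ)) := by
      rw [Int.ofNat_natAbs_of_nonpos hneg.le]; ring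
    have hkval : Wu ^ k = (Wu⁻¹) ^ (k.natAbs) := by
      rw [hk2, zpow_neg, zpow_natCast, ← inv_pow]
      norm_num [Int.natAbs_neg]
      congr 1
      rw [Int.abs_eq_natAbs, Int.natAbs_natCast]
    rw [hkval, Units.val_pow_eq_pow_val, ← hmm, hE1, hG]
    have hks : (k : ℤ) = -((p:ℤ) ^ t * (m:ℤ)) := by
      have : ((k.natAbs : ℤ)) = (p:ℤ) ^ t * (m:ℤ) := by exact_mod_cast congrArg (Nat.cast : ℕ → ℤ) hmm.symm
      rw [Int.ofNat_natAbs_of_nonpos hneg.le] at this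
      linarith
    rw [hks]
    match_scalars <;> push_cast <;> ring
  · -- k > 0
    obtain ⟨E, hE⟩ := pow_expand_full hp hp2 t m B ((Wu : R3ˣ) : R3) hB
    refine ⟨E, ?_⟩
    have hkval : Wu ^ k = Wu ^ (k.natAbs) := by
      rw [← zpow_natCast, Int.natAbs_of_nonneg hpos.le]
    rw [hkval, Units.val_pow_eq_pow_val, ← hmm, hE]
    have hks : (k : ℤ) = (p:ℤ) ^ t * (m:ℤ) := by
      have : ((k.natAbs : ℤ)) = (p:ℤ) ^ t * (m:ℤ) := by exact_mod_cast congrArg (Nat.cast : ℕ → ℤ) hmm.symm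
      rw [Int.natAbs_of_nonneg hpos.le] at this
      linarith
    rw [hks]
    match_scalars <;> push_cast <;> ring

end MLaux

lemma T_zeros (T : ℤ → ℤ) (hT0 : T 0 = 0) (hT1 : T 1 = 1) (hT2 : T 2 = 1)
    (hTrec : ∀ n : ℤ, T (n + 3) = T (n + 2) + T (n + 1) + T n) :
    T (-1) = 0 ∧ T (-4) = 0 ∧ T (-17) = 0 := by
  have em1 : T (-1) = (0) := by have h := hTrec (-1); norm_num at h; linarith
  have em2 : T (-2) = (1) := by have h := hTrec (-2); norm_num at h; linarith
  have em3 : T (-3) = (-1) := by have h := hTrec (-3); norm_num at h; linarith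
  have em4 : T (-4) = (0) := by have h := hTrec (-4); norm_num at h; linarith
  have em5 : T (-5) = (2) := by have h := hTrec (-5); norm_num at h; linarith
  have em6 : T (-6) = (-3) := by have h := hTrec (-6); norm_num at h; linarith
  have em7 : T (-7) = (1) := by have h := hTrec (-7); norm_num at h; linarith
  have em8 : T (-8) = (4) := by have h := hTrec (-8); norm_num at h; linarith
  have em9 : T (-9) = (-8) := by have h := hTrec (-9); norm_num at h; linarith
  have em10 : T (-10) = (5) := by have h := hTrec (-10); norm_num at h; linarith
  have em11 : T (-11) = (7) := by have h := hTrec (-11); norm_num at h; linarith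
  have em12 : T (-12) = (-20) := by have h := hTrec (-12); norm_num at h; linarith
  have em13 : T (-13) = (18) := by have h := hTrec (-13); norm_num at h; linarith
  have em14 : T (-14) = (9) := by have h := hTrec (-14); norm_num at h; linarith
  have em15 : T (-15) = (-47) := by have h := hTrec (-15); norm_num at h; linarith
  have em16 : T (-16) = (56) := by have h := hTrec (-16); norm_num at h; linarith
  have em17 : T (-17) = (0) := by have h := hTrec (-17); norm_num at h; linarith
  exact ⟨em1, em4, em17⟩

/-- **Sufficient condition for the Marques–Lengyel conjecture to hold.**
Here `N` is the period of the Tribonacci sequence `T` modulo `p`. If every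
`ℓ ∈ {0, …, N−1}` with `p ∣ T(ℓ)` satisfies `T(ℓ+N) ≢ T(ℓ) (mod p²)` and
`ℓ ≡ a (mod N)` for some `a ∈ {0, −1, −4, −17}`, then the Marques–Lengyel property
holds at `p`. -/
theorem marquesLengyel_success_criterion
    (T : ℤ → ℤ)
    (hT0 : T 0 = 0) (hT1 : T 1 = 1) (hT2 : T 2 = 1)
    (hTrec : ∀ n : ℤ, T (n + 3) = T (n + 2) + T (n + 1) + T n)
    (p : ℕ) (hp : Nat.Prime p) (hp2 : p ≠ 2) (hp11 : p ≠ 11)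
    (N : ℕ) (hNpos : 0 < N)
    (hNper : ∀ n : ℤ, (p : ℤ) ∣ (T (n + N) - T n))
    (hNmin : ∀ M : ℕ, 0 < M → (∀ n : ℤ, (p : ℤ) ∣ (T (n + M) - T n)) → N ≤ M)
    (hcond : ∀ ℓ : ℕ, ℓ < N → (p : ℤ) ∣ T ℓ →
      ¬ ((p : ℤ) ^ 2 ∣ (T ((ℓ : ℤ) + N) - T ℓ)) ∧
      ∃ a : ℤ, a ∈ ({0, -1, -4, -17} : Set ℤ) ∧ (N : ℤ) ∣ ((ℓ : ℤ) - a)) :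
    MarquesLengyelProp p T := by
  classical
  haveI : Fact p.Prime := ⟨hp⟩
  obtain ⟨B, hB⟩ := MLaux.exists_B T hT0 hT1 hT2 hTrec hNper
  set Wu : MLaux.R3ˣ := MLaux.U ^ (N:ℤ) with hWu
  have key : ∀ x y : ℤ, (N:ℤ) ∣ y - x → ∃ k : ℤ, y - x = (N:ℤ) * k ∧
      MLaux.vv T y = ((Wu ^ k : MLaux.R3ˣ) : MLaux.R3).mulVec (MLaux.vv T x) := by
    rintro x y ⟨k, hk⟩
    refine ⟨k, hk, ?_⟩
    have hy : y = x + (N:ℤ) * k := by linarith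
    rw [hy, MLaux.vv_zpow hTrec ((N:ℤ)*k) x, hWu, zpow_mul]
  have hTval : ∀ n : ℤ, T n = MLaux.vv T n 2 := by intro n; simp [MLaux.vv]
  have habs : ∀ (c : ℕ) (z : ℤ), ((c:ℤ) ∣ z) ↔ c ∣ z.natAbs := by
    intro c z
    rw [← Int.natAbs_dvd_natAbs, Int.natAbs_natCast]
  refine ⟨N, hNpos, ?_⟩
  intro i hiN
  by_cases hpTi : (p:ℤ) ∣ T (i:ℤ)
  · right
    obtain ⟨hnd, a, ha, hdvd⟩ := hcond i hiN hpTi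
    have hTa : T a = 0 := by
      obtain ⟨e1, e4, e17⟩ := T_zeros T hT0 hT1 hT2 hTrec
      simp only [Set.mem_insert_iff, Set.mem_singleton_iff] at ha
      rcases ha with h|h|h|h <;> rw [h] <;> assumption
    set Da : ℤ := (B.mulVec (MLaux.vv T a)) 2 with hDa
    have hpDa : ¬ (p:ℤ) ∣ Da := by
      have hiNper : MLaux.vv T ((i:ℤ) + N) = ((Wu : MLaux.R3ˣ) : MLaux.R3).mulVec (MLaux.vv T (i:ℤ)) := by
        rw [MLaux.vv_zpow hTrec (N:ℤ) (i:ℤ), hWu]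
      have hTiN : T ((i:ℤ) + N) = T (i:ℤ) + p * ((B.mulVec (MLaux.vv T (i:ℤ))) 2) := by
        rw [hTval ((i:ℤ)+(N:ℤ)), hiNper, hB, Matrix.add_mulVec, Matrix.one_mulVec,
          Matrix.smul_mulVec]
        simp only [Pi.add_apply, Pi.smul_apply, smul_eq_mul]
        rw [← hTval (i:ℤ)]
      have hdiv : ¬ (p:ℤ) ∣ ((B.mulVec (MLaux.vv T (i:ℤ))) 2) := by
        intro hcon
        apply hnd
        obtain ⟨c, hc⟩ := hcon
        rw [hTiN, hc]
        exact ⟨c, by ring⟩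
      obtain ⟨m0, hm0, hvvi⟩ := key a (i:ℤ) hdvd
      obtain ⟨S, hS⟩ := MLaux.modp_pow B hB m0
      have hDi : (B.mulVec (MLaux.vv T (i:ℤ))) 2 = Da + p * (((B*S).mulVec (MLaux.vv T a)) 2) := by
        rw [hvvi, hS, Matrix.mulVec_mulVec, mul_add, mul_one, mul_smul_comm,
          Matrix.add_mulVec, Matrix.smul_mulVec]
        simp only [Pi.add_apply, Pi.smul_apply, smul_eq_mul]
        rfl
      intro hcon
      apply hdiv
      rw [hDi]
      exact dvd_add hcon ⟨_, rfl⟩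
    refine ⟨a, 1 - (padicValNat p N : ℤ), 1, one_pos, ?_, ?_⟩
    · have h2 : ((p:ℤ))^(padicValNat p N) ∣ (N:ℤ) := by
        exact_mod_cast pow_padicValNat_dvd (p := p) (n := N)
      refine h2.trans ?_
      have h3 := (dvd_neg.mpr hdvd)
      rwa [neg_sub] at h3
    · apply Set.Finite.subset (Set.finite_singleton a)
      rintro n ⟨hni, hne⟩
      simp only [Set.mem_singleton_iff]
      by_contra hna
      apply hne
      have hna' : n - a ≠ 0 := sub_ne_zero.mpr hna
      have hdna : (N:ℤ) ∣ n - a := by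
        have he : n - a = (n - (i:ℤ)) + ((i:ℤ) - a) := by ring
        rw [he]; exact dvd_add hni hdvd
      obtain ⟨k, hk, hvvn⟩ := key a n hdna
      have hk0 : k ≠ 0 := by rintro rfl; rw [mul_zero] at hk; exact hna' hk
      obtain ⟨E, hE⟩ := MLaux.main_expand hp hp2 B hB k hk0
      set t : ℕ := padicValNat p k.natAbs with htdef
      set r : ℤ := (E.mulVec (MLaux.vv T a)) 2 with hr
      have hTn : T n = k * p * Da + (p:ℤ)^(t+2) * r := by
        rw [hTval n, hvvn, hE, Matrix.add_mulVec, Matrix.add_mulVec, Matrix.one_mulVec,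
          Matrix.smul_mulVec, Matrix.smul_mulVec]
        simp only [Pi.add_apply, Pi.smul_apply, smul_eq_mul]
        rw [← hDa, ← hr, ← hTval a, hTa]
        ring
      have hpt : ((p:ℤ))^t ∣ k := by
        have h1 : (p^t : ℕ) ∣ k.natAbs := pow_padicValNat_dvd
        have h2 : ((p^t : ℕ) : ℤ) ∣ k := by rw [habs]; exact h1
        exact_mod_cast h2
      obtain ⟨m', hm'⟩ := hpt
      have hpm' : ¬ (p:ℤ) ∣ m' := by
        intro hcon
        obtain ⟨c, hc⟩ := hcon
        have h1 : ((p:ℤ))^(t+1) ∣ k := ⟨c, by rw [hm', hc]; ring⟩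
        have h2 : (p^(t+1) : ℕ) ∣ k.natAbs := by
          rw [← habs]
          exact_mod_cast h1
        exact pow_succ_padicValNat_not_dvd (Int.natAbs_ne_zero.mpr hk0) h2
      set c : ℤ := m' * Da + p * r with hc
      have hpc : ¬ (p:ℤ) ∣ c := by
        intro hcon
        have h1 : (p:ℤ) ∣ m' * Da := by
          have he : m' * Da = c - p * r := by rw [hc]; ring
          rw [he]
          exact dvd_sub hcon ⟨r, rfl⟩
        have hpprime : Prime (p:ℤ) := Nat.prime_iff_prime_int.mp hp
        rcases hpprime.dvd_mul.mp h1 with h | h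
        · exact hpm' h
        · exact hpDa h
      have hTn2 : T n = (p:ℤ)^(t+1) * c := by rw [hTn, hm', hc]; ring
      have hc0 : c ≠ 0 := fun h => hpc (h ▸ dvd_zero _)
      have hppow0 : ((p:ℤ))^(t+1) ≠ 0 := pow_ne_zero _ (by exact_mod_cast hp.pos.ne')
      have hv1 : padicValInt p (T n) = t + 1 := by
        rw [hTn2, padicValInt.mul hppow0 hc0]
        have e1 : padicValInt p ((p:ℤ)^(t+1)) = t+1 := by
          simp [padicValInt, Int.natAbs_pow, padicValNat.prime_pow]
        have e2 : padicValInt p c = 0 := by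
          simp only [padicValInt]
          apply padicValNat.eq_zero_of_not_dvd
          intro hcon
          rw [← habs] at hcon
          exact hpc hcon
        rw [e1, e2]
      have hN0 : ((N:ℤ)) ≠ 0 := Int.natCast_ne_zero.mpr hNpos.ne'
      have hv2 : padicValInt p (n - a) = padicValNat p N + t := by
        rw [hk, padicValInt.mul hN0 hk0]
        have e1 : padicValInt p ((N:ℤ)) = padicValNat p N := by
          simp [padicValInt]
        have e2 : padicValInt p k = t := rfl
        rw [e1, e2]
      rw [hv1, hv2]
      push_cast
      ring
  · left
    refine ⟨0, ?_⟩
    convert Set.finite_empty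
    rw [Set.eq_empty_iff_forall_notMem]
    rintro n ⟨hni, hne⟩
    apply hne
    obtain ⟨k, hk, hvvn⟩ := key (i:ℤ) n hni
    obtain ⟨S, hS⟩ := MLaux.modp_pow B hB k
    have hTn : T n = T (i:ℤ) + p * ((S.mulVec (MLaux.vv T (i:ℤ))) 2) := by
      rw [hTval n, hvvn, hS, Matrix.add_mulVec, Matrix.one_mulVec, Matrix.smul_mulVec]
      simp only [Pi.add_apply, Pi.smul_apply, smul_eq_mul]
      rw [← hTval (i:ℤ)]
    have hpn : ¬ (p:ℤ) ∣ T n := by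
      intro hcon
      apply hpTi
      have he : T (i:ℤ) = T n - p * ((S.mulVec (MLaux.vv T (i:ℤ))) 2) := by rw [hTn]; ring
      rw [he]
      exact dvd_sub hcon ⟨_, rfl⟩
    simp only [padicValInt]
    apply padicValNat.eq_zero_of_not_dvd
    intro hcon
    rw [← habs] at hcon
    exact hpn hcon
end

section
/- Let p be a prime with p ≡ 2 (mod 3), and let λ₁, λ₂, λ₃ ∈ ℤ_p be three pairwise distinct roots of P(X) = X³ − X² − X − 1. If μ₁, μ₂, μ₃ ∈ ℚ_p satisfy μᵢ³ = λᵢ for i = 1, 2, 3, then λ₁·P′(λ₁)⁻¹·μ₁ + λ₂·P′(λ₂)⁻¹·μ₂ + λ₃·P′(λ₃)⁻¹·μ₃ = 0. -/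
lemma cube_eq_one {p : ℕ} [hp : Fact (Nat.Prime p)] (hp3 : p % 3 = 2)
    (z : ℚ_[p]) (hz : z ^ 3 = 1) : z = 1 := by
  have hnorm : ‖z‖ ≤ 1 := by
    by_contra h
    push_neg at h
    have h3 : ‖z‖ ^ 3 = 1 := by rw [← norm_pow, hz, norm_one]
    have := one_lt_pow₀ h (three_ne_zero)
    simp only [h3] at this
    exact lt_irrefl 1 this
  set b : ℤ_[p] := ⟨z, hnorm⟩ with hb
  have hbz : (b : ℚ_[p]) = z := rfl
  have hb3 : b ^ 3 = 1 := by
    apply Subtype.coe_injective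
    push_cast [hbz]
    exact hz
  have hfac : (b - 1) * (b ^ 2 + b + 1) = 0 := by linear_combination hb3
  rcases mul_eq_zero.mp hfac with h | h
  · have hb1 : b = 1 := by linear_combination h
    rw [← hbz, hb1, PadicInt.coe_one]
  · exfalso
    set c : ZMod p := PadicInt.toZMod b with hc
    have hcq : c ^ 2 + c + 1 = 0 := by
      have := congrArg (PadicInt.toZMod) h
      simpa [hc] using this
    have hc3 : c ^ 3 = 1 := by linear_combination (c - 1) * hcq
    have hc0 : c ≠ 0 := by
      intro h0
      rw [h0] at hcq
      simp at hcq
    have hord3 : orderOf c ∣ 3 := orderOf_dvd_of_pow_eq_one hc3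
    have hcp : c ^ (p - 1) = 1 := ZMod.pow_card_sub_one_eq_one hc0
    have hordp : orderOf c ∣ p - 1 := orderOf_dvd_of_pow_eq_one hcp
    have hnd : ¬ (3 ∣ p - 1) := by omega
    have hcop : Nat.Coprime 3 (p - 1) :=
      (Nat.Prime.coprime_iff_not_dvd (by norm_num)).mpr hnd
    have hord1 : orderOf c = 1 := by
      have h1 : orderOf c ∣ Nat.gcd 3 (p - 1) := Nat.dvd_gcd hord3 hordp
      rwa [Nat.Coprime.gcd_eq_one hcop, Nat.dvd_one] at h1
    have hc1 : c = 1 := orderOf_eq_one_iff.mp hord1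
    rw [hc1] at hcq
    norm_num at hcq
    have : (3 : ZMod p) = 0 := by linear_combination hcq
    have h3 : ((3 : ℕ) : ZMod p) = 0 := by exact_mod_cast this
    have hdvd : p ∣ 3 := (ZMod.natCast_eq_zero_iff 3 p).mp h3
    have := Nat.le_of_dvd (by norm_num) hdvd
    interval_cases p <;> omega



/-- Let `p ≡ 2 (mod 3)` be a prime and `λ₁, λ₂, λ₃ ∈ ℤ_p` pairwise distinct roots of
`P(X) = X³ − X² − X − 1`. If `μᵢ ∈ ℚ_p` are cube roots of the `λᵢ`, then
`λ₁·P′(λ₁)⁻¹·μ₁ + λ₂·P′(λ₂)⁻¹·μ₂ + λ₃·P′(λ₃)⁻¹·μ₃ = 0`. -/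
theorem padic_tribonacci_cube_root_vanishing
    (p : ℕ) [hp : Fact (Nat.Prime p)] (hp3 : p % 3 = 2)
    (lam₁ lam₂ lam₃ : ℤ_[p])
    (h₁ : lam₁ ^ 3 - lam₁ ^ 2 - lam₁ - 1 = 0)
    (h₂ : lam₂ ^ 3 - lam₂ ^ 2 - lam₂ - 1 = 0)
    (h₃ : lam₃ ^ 3 - lam₃ ^ 2 - lam₃ - 1 = 0)
    (h12 : lam₁ ≠ lam₂) (h13 : lam₁ ≠ lam₃) (h23 : lam₂ ≠ lam₃)
    (μ₁ μ₂ μ₃ : ℚ_[p])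
    (hμ₁ : μ₁ ^ 3 = (lam₁ : ℚ_[p]))
    (hμ₂ : μ₂ ^ 3 = (lam₂ : ℚ_[p]))
    (hμ₃ : μ₃ ^ 3 = (lam₃ : ℚ_[p])) :
    (lam₁ : ℚ_[p]) * (3 * (lam₁ : ℚ_[p]) ^ 2 - 2 * (lam₁ : ℚ_[p]) - 1)⁻¹ * μ₁ +
    (lam₂ : ℚ_[p]) * (3 * (lam₂ : ℚ_[p]) ^ 2 - 2 * (lam₂ : ℚ_[p]) - 1)⁻¹ * μ₂ +
    (lam₃ : ℚ_[p]) * (3 * (lam₃ : ℚ_[p]) ^ 2 - 2 * (lam₃ : ℚ_[p]) - 1)⁻¹ * μ₃ = 0 := by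
  set x₁ : ℚ_[p] := (lam₁ : ℚ_[p]) with hx₁
  set x₂ : ℚ_[p] := (lam₂ : ℚ_[p]) with hx₂
  set x₃ : ℚ_[p] := (lam₃ : ℚ_[p]) with hx₃
  have H₁ : x₁ ^ 3 - x₁ ^ 2 - x₁ - 1 = 0 := by
    have := congrArg (fun z : ℤ_[p] => (z : ℚ_[p])) h₁
    push_cast at this; exact this
  have H₂ : x₂ ^ 3 - x₂ ^ 2 - x₂ - 1 = 0 := by
    have := congrArg (fun z : ℤ_[p] => (z : ℚ_[p])) h₂
    push_cast at this; exact this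
  have H₃ : x₃ ^ 3 - x₃ ^ 2 - x₃ - 1 = 0 := by
    have := congrArg (fun z : ℤ_[p] => (z : ℚ_[p])) h₃
    push_cast at this; exact this
  have ne12 : x₁ ≠ x₂ := fun h => h12 (Subtype.coe_injective h)
  have ne13 : x₁ ≠ x₃ := fun h => h13 (Subtype.coe_injective h)
  have ne23 : x₂ ≠ x₃ := fun h => h23 (Subtype.coe_injective h)
  -- symmetric relations
  have A12 : x₁ ^ 2 + x₁ * x₂ + x₂ ^ 2 - x₁ - x₂ - 1 = 0 := by
    have hfac : (x₁ - x₂) * (x₁ ^ 2 + x₁ * x₂ + x₂ ^ 2 - x₁ - x₂ - 1) = 0 := by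
      linear_combination H₁ - H₂
    rcases mul_eq_zero.mp hfac with h | h
    · exact absurd (sub_eq_zero.mp h) ne12
    · exact h
  have A13 : x₁ ^ 2 + x₁ * x₃ + x₃ ^ 2 - x₁ - x₃ - 1 = 0 := by
    have hfac : (x₁ - x₃) * (x₁ ^ 2 + x₁ * x₃ + x₃ ^ 2 - x₁ - x₃ - 1) = 0 := by
      linear_combination H₁ - H₃
    rcases mul_eq_zero.mp hfac with h | h
    · exact absurd (sub_eq_zero.mp h) ne13
    · exact h
  have E0 : x₁ + x₂ + x₃ = 1 := by
    have hfac : (x₂ - x₃) * (x₁ + x₂ + x₃ - 1) = 0 := by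
      linear_combination A12 - A13
    rcases mul_eq_zero.mp hfac with h | h
    · exact absurd (sub_eq_zero.mp h) ne23
    · linear_combination h
  have E2 : x₁ * x₂ + x₁ * x₃ + x₂ * x₃ = -1 := by
    linear_combination (x₁ + x₂) * E0 - A12
  have D1 : 3 * x₁ ^ 2 - 2 * x₁ - 1 = (x₁ - x₂) * (x₁ - x₃) := by
    linear_combination 2 * x₁ * E0 - E2
  have D2 : 3 * x₂ ^ 2 - 2 * x₂ - 1 = (x₂ - x₁) * (x₂ - x₃) := by
    linear_combination 2 * x₂ * E0 - E2
  have D3 : 3 * x₃ ^ 2 - 2 * x₃ - 1 = (x₃ - x₁) * (x₃ - x₂) := by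
    linear_combination 2 * x₃ * E0 - E2
  -- nonvanishing
  have hx1ne : x₁ ≠ 0 := by
    intro h0; rw [h0] at H₁; norm_num at H₁
  have hx2ne : x₂ ≠ 0 := by
    intro h0; rw [h0] at H₂; norm_num at H₂
  have hx3ne : x₃ ≠ 0 := by
    intro h0; rw [h0] at H₃; norm_num at H₃
  have hμ1ne : μ₁ ≠ 0 := by
    intro h0; rw [h0] at hμ₁; exact hx1ne (by rw [← hμ₁]; norm_num)
  have hμ2ne : μ₂ ≠ 0 := by
    intro h0; rw [h0] at hμ₂; exact hx2ne (by rw [← hμ₂]; norm_num)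
  have hμ3ne : μ₃ ≠ 0 := by
    intro h0; rw [h0] at hμ₃; exact hx3ne (by rw [← hμ₃]; norm_num)
  -- cube identities
  have C1 : (x₁ ^ 2 - x₁) ^ 3 = 2 * x₁ := by
    linear_combination (x₁ ^ 3 - 2 * x₁ ^ 2 + 2 * x₁) * H₁
  have C2 : (x₂ ^ 2 - x₂) ^ 3 = 2 * x₂ := by
    linear_combination (x₂ ^ 3 - 2 * x₂ ^ 2 + 2 * x₂) * H₂
  have C3 : (x₃ ^ 2 - x₃) ^ 3 = 2 * x₃ := by
    linear_combination (x₃ ^ 3 - 2 * x₃ ^ 2 + 2 * x₃) * H₃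
  set t₁ : ℚ_[p] := (x₁ ^ 2 - x₁) / μ₁ with ht₁
  set t₂ : ℚ_[p] := (x₂ ^ 2 - x₂) / μ₂ with ht₂
  set t₃ : ℚ_[p] := (x₃ ^ 2 - x₃) / μ₃ with ht₃
  have ht₁3 : t₁ ^ 3 = 2 := by
    rw [ht₁, div_pow, C1, hμ₁]
    field_simp
  have ht₂3 : t₂ ^ 3 = 2 := by
    rw [ht₂, div_pow, C2, hμ₂]
    field_simp
  have ht₃3 : t₃ ^ 3 = 2 := by
    rw [ht₃, div_pow, C3, hμ₃]
    field_simp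
  have ht₁ne : t₁ ≠ 0 := by
    intro h0; rw [h0] at ht₁3; norm_num at ht₁3
  have ht₂ne : t₂ ≠ 0 := by
    intro h0; rw [h0] at ht₂3; norm_num at ht₂3
  have ht₃ne : t₃ ≠ 0 := by
    intro h0; rw [h0] at ht₃3; norm_num at ht₃3
  have heq12 : t₂ = t₁ := by
    have : (t₂ / t₁) ^ 3 = 1 := by
      rw [div_pow, ht₁3, ht₂3]; norm_num
    have := cube_eq_one hp3 _ this
    field_simp at this
    exact this
  have heq13 : t₃ = t₁ := by
    have : (t₃ / t₁) ^ 3 = 1 := by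
      rw [div_pow, ht₁3, ht₃3]; norm_num
    have := cube_eq_one hp3 _ this
    field_simp at this
    exact this
  have hm1 : μ₁ = (x₁ ^ 2 - x₁) / t₁ := by
    rw [eq_div_iff ht₁ne, ht₁]; field_simp
  have hm2 : μ₂ = (x₂ ^ 2 - x₂) / t₁ := by
    rw [eq_div_iff ht₁ne, ← heq12, ht₂]; field_simp
  have hm3 : μ₃ = (x₃ ^ 2 - x₃) / t₁ := by
    rw [eq_div_iff ht₁ne, ← heq13, ht₃]; field_simp
  clear_value t₁ t₂ t₃
  rw [D1, D2, D3, hm1, hm2, hm3]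
  have n12 : x₁ - x₂ ≠ 0 := sub_ne_zero.mpr ne12
  have n13 : x₁ - x₃ ≠ 0 := sub_ne_zero.mpr ne13
  have n23 : x₂ - x₃ ≠ 0 := sub_ne_zero.mpr ne23
  have n21 : x₂ - x₁ ≠ 0 := sub_ne_zero.mpr ne12.symm
  have n31 : x₃ - x₁ ≠ 0 := sub_ne_zero.mpr ne13.symm
  have n32 : x₃ - x₂ ≠ 0 := sub_ne_zero.mpr ne23.symm
  rw [mul_inv, mul_inv, mul_inv]
  have expand : ∀ a b c d e : ℚ_[p], b ≠ 0 → c ≠ 0 → e ≠ 0 →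
      a * (b⁻¹ * c⁻¹) * (d / e) = (a * d) / (b * c * e) := by
    intro a b c d e hb hc he
    field_simp
  rw [expand _ _ _ _ _ n12 n13 ht₁ne, expand _ _ _ _ _ n21 n23 ht₁ne,
    expand _ _ _ _ _ n31 n32 ht₁ne, div_add_div _ _
      (mul_ne_zero (mul_ne_zero n12 n13) ht₁ne) (mul_ne_zero (mul_ne_zero n21 n23) ht₁ne),
    div_add_div _ _
      (mul_ne_zero (mul_ne_zero (mul_ne_zero n12 n13) ht₁ne) (mul_ne_zero (mul_ne_zero n21 n23) ht₁ne))
      (mul_ne_zero (mul_ne_zero n31 n32) ht₁ne),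
    div_eq_zero_iff]
  left
  linear_combination (t₁^2 * ((-1)*x₂^2*x₃^4 + (2)*x₂^3*x₃^3 + (-1)*x₂^4*x₃^2 + (2)*x₁*x₂*x₃^4 + (-2)*x₁*x₂^2*x₃^3 + (-2)*x₁*x₂^3*x₃^2 + (2)*x₁*x₂^4*x₃ + (-1)*x₁^2*x₃^4 + (-2)*x₁^2*x₂*x₃^3 + (6)*x₁^2*x₂^2*x₃^2 + (-2)*x₁^2*x₂^3*x₃ + (-1)*x₁^2*x₂^4 + (2)*x₁^3*x₃^3 + (-2)*x₁^3*x₂*x₃^2 + (-2)*x₁^3*x₂^2*x₃ + (2)*x₁^3*x₂^3 + (-1)*x₁^4*x₃^2 + (2)*x₁^4*x₂*x₃ + (-1)*x₁^4*x₂^2)) * E0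
end
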